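/- arXiv:2209.11491 — 3 statements merged into one kernel-verified Lean document; each statement's English description precedes it below -/
import Mathlib

section
/- Suppose g admits the resolvent representation g(x,i) = Σ_{k=1}^n 2p_k ∫₀^∞ g_r((x,i),(y,k)) f_k(y) dy + (1/θ)·e^{−θx}·Δ₀. Then for every leg i the right derivative g⁺(0,i) := lim_{δ↓0} (g(δ,i) − g(0,i))/δ exists, and Δ₀ = −Σ_{i=1}^n p_i · g⁺(0,i). -/
open Filter Topology MeasureTheory

/-- Green function of the Brownian spider with `n` legs, weights `p`, and `θ = √(2r)`. -/
noncomputable def spiderGreen (n : ℕ) (p : Fin n → ℝ) (θ : ℝ)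
    (x : ℝ) (i : Fin n) (y : ℝ) (j : Fin n) : ℝ :=
  if i = j then
    (1/θ) * Real.exp (-θ * max x y) *
      ((1 / p i) * Real.sinh (θ * min x y) + Real.exp (-θ * min x y))
  else (1/θ) * Real.exp (-θ * x) * Real.exp (-θ * y)

lemma spiderGreen_eq (n : ℕ) (p : Fin n → ℝ) (θ : ℝ) (hθ : 0 < θ) (i : Fin n)
    (hpi : p i ≠ 0) (x y : ℝ) :
    spiderGreen n p θ x i y i =
      ((1/p i) * Real.sinh (θ*x) + Real.exp (-θ*x)) * ((1/θ) * Real.exp (-θ*y))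
        - (1/(θ * p i)) * max 0 (Real.sinh (θ*(x - y))) := by
  have hθ' : θ ≠ 0 := ne_of_gt hθ
  have e1 : ∀ t : ℝ, Real.exp (-θ * t) = (Real.exp (θ * t))⁻¹ := fun t => by
    rw [neg_mul, Real.exp_neg]
  unfold spiderGreen
  rw [if_pos rfl]
  rcases le_total x y with h | h
  · rw [max_eq_right h, min_eq_left h]
    have hs : Real.sinh (θ*(x-y)) ≤ 0 := by
      rw [Real.sinh_nonpos_iff]
      nlinarith
    rw [max_eq_left hs]
    ring
  · rw [max_eq_left h, min_eq_right h]
    have hs : 0 ≤ Real.sinh (θ*(x-y)) := by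
      rw [Real.sinh_nonneg_iff]
      nlinarith
    rw [max_eq_right hs]
    simp only [Real.sinh_eq, mul_sub, neg_mul, neg_sub, Real.exp_sub, Real.exp_neg]
    field_simp
    ring

/-- if `g` admits the resolvent representation
`g(x,i) = Σ_k 2p_k ∫₀^∞ g_r((x,i),(y,k)) f_k(y) dy + (1/θ)e^{−θx}·Δ₀`, then the right
derivatives `g⁺(0,i)` exist and `Δ₀ = −Σ p_i g⁺(0,i)`. -/
theorem stmt_13 (n : ℕ) (hn : 1 ≤ n) (p : Fin n → ℝ)
    (hp : ∀ k, 0 < p k) (hpsum : ∑ k, p k = 1)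
    (r : ℝ) (hr : 0 < r) (θ : ℝ) (hθ : θ = Real.sqrt (2 * r))
    (f : Fin n → ℝ → ℝ) (hf_meas : ∀ k, Measurable (f k))
    (hf_locbdd : ∀ k, ∀ K : ℝ, ∃ C, ∀ y ∈ Set.Icc (0:ℝ) K, |f k y| ≤ C)
    (hf_int : ∀ k, IntegrableOn (fun y => Real.exp (-θ * y) * |f k y|) (Set.Ioi 0))
    (Δ₀ : ℝ) (g : ℝ → Fin n → ℝ)
    (hrep : ∀ x ≥ (0:ℝ), ∀ i, g x i =
      (∑ k, 2 * p k * ∫ y in Set.Ioi (0:ℝ), spiderGreen n p θ x i y k * f k y) +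
        (1/θ) * Real.exp (-θ * x) * Δ₀) :
    ∃ d : Fin n → ℝ,
      (∀ i, Tendsto (fun δ => (g δ i - g 0 i) / δ) (𝓝[>] 0) (𝓝 (d i))) ∧
      Δ₀ = -∑ i, p i * d i := by
  have hθ0 : 0 < θ := hθ ▸ Real.sqrt_pos.mpr (by linarith)
  have hθ' : θ ≠ 0 := ne_of_gt hθ0
  set I : Fin n → ℝ := fun k => ∫ y in Set.Ioi (0:ℝ), Real.exp (-θ * y) * f k y with hIdef
  -- integrability of e^{-θy} f k
  have hint : ∀ k, IntegrableOn (fun y => Real.exp (-θ * y) * f k y) (Set.Ioi 0) := by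
    intro k
    refine (hf_int k).mono' ?_ ?_
    · exact ((Real.continuous_exp.comp (continuous_const.mul continuous_id)).measurable.mul
        (hf_meas k)).aestronglyMeasurable
    · filter_upwards with y
      rw [Real.norm_eq_abs, abs_mul, abs_of_pos (Real.exp_pos _)]
  refine ⟨fun i => 2 * I i - 2 * ∑ k, p k * I k - Δ₀, ?_, ?_⟩
  · intro i
    have hpi := hp i
    have hpi' : p i ≠ 0 := ne_of_gt hpi
    obtain ⟨C, hC⟩ := hf_locbdd i 1
    have hC0 : 0 ≤ C := le_trans (abs_nonneg _) (hC 0 ⟨le_refl 0, zero_le_one⟩)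
    set c : ℝ → ℝ := fun x => (1/p i) * Real.sinh (θ*x) + Real.exp (-θ*x) with hcdef
    set S : ℝ → ℝ := fun x => ∫ y in Set.Ioi (0:ℝ), max 0 (Real.sinh (θ*(x - y))) * f i y
      with hSdef
    -- measurability of the max-sinh integrand
    have hmeas : ∀ x : ℝ, AEStronglyMeasurable
        (fun y => max 0 (Real.sinh (θ*(x - y))) * f i y) (volume.restrict (Set.Ioi 0)) := by
      intro x
      exact ((continuous_const.max (Real.continuous_sinh.comp
        (continuous_const.mul (continuous_const.sub continuous_id)))).measurable.mul
        (hf_meas i)).aestronglyMeasurable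
    -- integrability of the max-sinh integrand for x ∈ [0,1]
    have hmaxint : ∀ x ∈ Set.Icc (0:ℝ) 1,
        IntegrableOn (fun y => max 0 (Real.sinh (θ*(x - y))) * f i y) (Set.Ioi 0) := by
      intro x hx
      refine Integrable.mono' (g := (Set.Ioc (0:ℝ) 1).indicator fun _ => Real.sinh (θ*1) * C)
        ?_ (hmeas x) ?_
      · rw [integrable_indicator_iff measurableSet_Ioc]
        exact integrableOn_const (by simp [Real.volume_Ioc])
      · filter_upwards [ae_restrict_mem measurableSet_Ioi] with y hy
        simp only [Set.mem_Ioi] at hy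
        rcases le_or_gt y x with h | h
        · have hy1 : y ∈ Set.Ioc (0:ℝ) 1 := ⟨hy, le_trans h hx.2⟩
          rw [Set.indicator_of_mem hy1, Real.norm_eq_abs, abs_mul]
          have h1 : |max 0 (Real.sinh (θ*(x - y)))| ≤ Real.sinh (θ*1) := by
            rw [abs_of_nonneg (le_max_left _ _), max_le_iff]
            constructor
            · exact Real.sinh_nonneg_iff.mpr (by positivity)
            · rw [Real.sinh_le_sinh]
              nlinarith [hx.2]
          have h2 : |f i y| ≤ C := hC y ⟨le_of_lt hy1.1, hy1.2⟩
          have h3 : (0:ℝ) ≤ Real.sinh (θ*1) := Real.sinh_nonneg_iff.mpr (by positivity)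
          exact mul_le_mul h1 h2 (abs_nonneg _) h3
        · have hz : max 0 (Real.sinh (θ*(x - y))) = 0 := by
            refine max_eq_left (Real.sinh_nonpos_iff.mpr ?_)
            nlinarith
          rw [hz, zero_mul, norm_zero]
          rcases le_or_gt y 1 with h1 | h1
          · rw [Set.indicator_of_mem (show y ∈ Set.Ioc (0:ℝ) 1 from ⟨hy, h1⟩)]; positivity
          · rw [Set.indicator_of_notMem (by simp [h1.not_ge])]
    -- integral identity for the i-th leg
    have hJ : ∀ x ∈ Set.Icc (0:ℝ) 1,
        (∫ y in Set.Ioi (0:ℝ), spiderGreen n p θ x i y i * f i y)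
          = c x * ((1/θ) * I i) - (1/(θ * p i)) * S x := by
      intro x hx
      have heq : ∀ y ∈ Set.Ioi (0:ℝ), spiderGreen n p θ x i y i * f i y
          = (c x * (1/θ)) * (Real.exp (-θ*y) * f i y)
            - (1/(θ * p i)) * (max 0 (Real.sinh (θ*(x - y))) * f i y) := by
        intro y _
        rw [spiderGreen_eq n p θ hθ0 i hpi' x y]
        ring
      rw [setIntegral_congr_fun measurableSet_Ioi heq, integral_sub
        (((hint i).const_mul _)) (((hmaxint x hx).const_mul _)),
        integral_const_mul, integral_const_mul]
      rw [hSdef, hIdef]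
      ring
    -- integral identity for other legs
    have hJne : ∀ (k : Fin n), k ≠ i → ∀ x : ℝ,
        (∫ y in Set.Ioi (0:ℝ), spiderGreen n p θ x i y k * f k y)
          = (1/θ) * Real.exp (-θ*x) * I k := by
      intro k hk x
      have heq : ∀ y ∈ Set.Ioi (0:ℝ), spiderGreen n p θ x i y k * f k y
          = ((1/θ) * Real.exp (-θ*x)) * (Real.exp (-θ*y) * f k y) := by
        intro y _
        unfold spiderGreen
        rw [if_neg (fun h => hk h.symm)]
        ring
      rw [setIntegral_congr_fun measurableSet_Ioi heq, integral_const_mul, hIdef]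
    -- closed form of g on [0,1]
    have hgform : ∀ x ∈ Set.Icc (0:ℝ) 1, g x i
        = (∑ k, 2 * p k * (if k = i then c x * ((1/θ) * I i) - (1/(θ * p i)) * S x
            else (1/θ) * Real.exp (-θ*x) * I k)) + (1/θ) * Real.exp (-θ*x) * Δ₀ := by
      intro x hx
      rw [hrep x hx.1 i]
      congr 1
      refine Finset.sum_congr rfl fun k _ => ?_
      by_cases hk : k = i
      · subst hk; rw [if_pos rfl, hJ x hx]
      · rw [if_neg hk, hJne k hk x]
    have hS0 : S 0 = 0 := by
      rw [hSdef]
      refine setIntegral_eq_zero_of_forall_eq_zero fun y hy => ?_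
      have : max 0 (Real.sinh (θ*(0 - y))) = 0 :=
        max_eq_left (Real.sinh_nonpos_iff.mpr (by simp at hy; nlinarith))
      rw [this, zero_mul]
    have hc0 : c 0 = 1 := by simp [hcdef]
    -- difference quotient identity, for δ ∈ Ioc 0 1
    have key : ∀ δ ∈ Set.Ioc (0:ℝ) 1, (g δ i - g 0 i) / δ
        = (∑ k, 2 * p k * (if k = i
              then ((c δ - c 0)/δ) * ((1/θ) * I i) - (1/(θ * p i)) * (S δ / δ)
              else (1/θ) * ((Real.exp (-θ*δ) - Real.exp (-θ*0))/δ) * I k))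
          + (1/θ) * ((Real.exp (-θ*δ) - Real.exp (-θ*0))/δ) * Δ₀ := by
      intro δ hδ
      have hδ0 : δ ≠ 0 := ne_of_gt hδ.1
      rw [hgform δ ⟨le_of_lt hδ.1, hδ.2⟩, hgform 0 ⟨le_refl 0, zero_le_one⟩, hc0, hS0]
      rw [add_sub_add_comm, ← Finset.sum_sub_distrib]
      rw [add_div, Finset.sum_div]
      congr 1
      · refine Finset.sum_congr rfl fun k _ => ?_
        by_cases hk : k = i
        · subst hk; rw [if_pos rfl, if_pos rfl, if_pos rfl]
          field_simp
          ring
        · rw [if_neg hk, if_neg hk, if_neg hk]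
          field_simp
      · field_simp
    -- limits of the building blocks
    have hcder : Tendsto (fun δ => (c δ - c 0)/δ) (𝓝[>] (0:ℝ)) (𝓝 ((1/p i)*θ - θ)) := by
      have h1 : HasDerivAt c ((1/p i)*θ - θ) 0 := by
        have hs : HasDerivAt (fun x : ℝ => Real.sinh (θ*x)) θ 0 := by
          simpa using ((hasDerivAt_id (0:ℝ)).const_mul θ).sinh
        have he : HasDerivAt (fun x : ℝ => Real.exp (-θ*x)) (-θ) 0 := by
          simpa using ((hasDerivAt_id (0:ℝ)).const_mul (-θ)).exp
        have h := (hs.const_mul (1/p i)).add he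
        exact h.congr_deriv (by ring)
      have h2 := hasDerivAt_iff_tendsto_slope.mp h1
      have h3 := h2.mono_left (nhdsWithin_mono 0 fun x hx => ne_of_gt hx)
      refine h3.congr fun δ => ?_
      simp [slope_def_field]
    have heder : Tendsto (fun δ => (Real.exp (-θ*δ) - Real.exp (-θ*0))/δ)
        (𝓝[>] (0:ℝ)) (𝓝 (-θ)) := by
      have h1 : HasDerivAt (fun x : ℝ => Real.exp (-θ*x)) (-θ) 0 := by
        simpa using ((hasDerivAt_id (0:ℝ)).const_mul (-θ)).exp
      have h2 := hasDerivAt_iff_tendsto_slope.mp h1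
      have h3 := h2.mono_left (nhdsWithin_mono 0 fun x hx => ne_of_gt hx)
      refine h3.congr fun δ => ?_
      simp [slope_def_field]
    have hSlim : Tendsto (fun δ => S δ / δ) (𝓝[>] (0:ℝ)) (𝓝 0) := by
      refine squeeze_zero_norm' (a := fun δ => Real.sinh (θ*δ) * C) ?_ ?_
      · filter_upwards [Ioc_mem_nhdsGT zero_lt_one] with δ hδ
        have hδ0 : 0 < δ := hδ.1
        have hSb : ‖S δ‖ ≤ Real.sinh (θ*δ) * C * δ := by
          have hδ' : δ ∈ Set.Icc (0:ℝ) 1 := ⟨le_of_lt hδ0, hδ.2⟩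
          have hdisj : Disjoint (Set.Ioc (0:ℝ) δ) (Set.Ioi δ) := by
            rw [Set.disjoint_left]
            intro a ha hb
            simp only [Set.mem_Ioc] at ha
            simp only [Set.mem_Ioi] at hb
            linarith [ha.2]
          have hInd : S δ = ∫ y in Set.Ioc (0:ℝ) δ,
              max 0 (Real.sinh (θ*(δ - y))) * f i y := by
            have h1 : IntegrableOn (fun y => max 0 (Real.sinh (θ*(δ - y))) * f i y)
                (Set.Ioc 0 δ) := (hmaxint δ hδ').mono_set Set.Ioc_subset_Ioi_self
            have h2 : IntegrableOn (fun y => max 0 (Real.sinh (θ*(δ - y))) * f i y)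
                (Set.Ioi δ) := (hmaxint δ hδ').mono_set (Set.Ioi_subset_Ioi (le_of_lt hδ0))
            show (∫ y in Set.Ioi (0:ℝ), max 0 (Real.sinh (θ*(δ - y))) * f i y) = _
            rw [← Set.Ioc_union_Ioi_eq_Ioi (le_of_lt hδ0),
              setIntegral_union hdisj measurableSet_Ioi h1 h2]
            have hz : ∫ y in Set.Ioi δ, max 0 (Real.sinh (θ*(δ - y))) * f i y = 0 := by
              refine setIntegral_eq_zero_of_forall_eq_zero fun y hy => ?_
              have hm : max 0 (Real.sinh (θ*(δ - y))) = 0 := by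
                refine max_eq_left (Real.sinh_nonpos_iff.mpr ?_)
                simp only [Set.mem_Ioi] at hy
                nlinarith
              rw [hm, zero_mul]
            rw [hz, add_zero]
          rw [hInd]
          have hbound : ∀ y ∈ Set.Ioc (0:ℝ) δ,
              ‖max 0 (Real.sinh (θ*(δ - y))) * f i y‖ ≤ Real.sinh (θ*δ) * C := by
            intro y hy
            rw [Real.norm_eq_abs, abs_mul]
            have hsnn : (0:ℝ) ≤ Real.sinh (θ*δ) := Real.sinh_nonneg_iff.mpr (by positivity)
            refine mul_le_mul ?_ (hC y ⟨le_of_lt hy.1, le_trans hy.2 hδ.2⟩) (abs_nonneg _) hsnn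
            rw [abs_of_nonneg (le_max_left _ _), max_le_iff]
            exact ⟨hsnn, Real.sinh_le_sinh.mpr (by nlinarith [hy.1])⟩
          have hb := norm_setIntegral_le_of_norm_le_const (μ := volume)
            measure_Ioc_lt_top hbound
          calc ‖∫ y in Set.Ioc (0:ℝ) δ, max 0 (Real.sinh (θ*(δ - y))) * f i y‖
              ≤ Real.sinh (θ*δ) * C * (volume (Set.Ioc (0:ℝ) δ)).toReal := hb
            _ = Real.sinh (θ*δ) * C * δ := by
                simp [Real.volume_Ioc, ENNReal.toReal_ofReal hδ0.le]
        have hnorm : ‖S δ / δ‖ = ‖S δ‖ / δ := by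
          rw [norm_div, Real.norm_of_nonneg (le_of_lt hδ0)]
        rw [hnorm, div_le_iff₀ hδ0]
        exact hSb
      · have : Tendsto (fun δ : ℝ => Real.sinh (θ*δ) * C) (𝓝[>] (0:ℝ)) (𝓝 (Real.sinh (θ*0) * C)) := by
          exact ((Real.continuous_sinh.comp (continuous_const.mul continuous_id)).mul
            continuous_const).continuousWithinAt.tendsto
        simpa using this
    -- assemble the limit
    have hmain : Tendsto (fun δ =>
        (∑ k, 2 * p k * (if k = i
            then ((c δ - c 0)/δ) * ((1/θ) * I i) - (1/(θ * p i)) * (S δ / δ)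
            else (1/θ) * ((Real.exp (-θ*δ) - Real.exp (-θ*0))/δ) * I k))
          + (1/θ) * ((Real.exp (-θ*δ) - Real.exp (-θ*0))/δ) * Δ₀)
        (𝓝[>] (0:ℝ))
        (𝓝 ((∑ k, 2 * p k * (if k = i
            then ((1/p i)*θ - θ) * ((1/θ) * I i) - (1/(θ * p i)) * (0:ℝ)
            else (1/θ) * (-θ) * I k)) + (1/θ) * (-θ) * Δ₀)) := by
      refine Tendsto.add (tendsto_finset_sum _ fun k _ => ?_) ?_
      · by_cases hk : k = i
        · subst hk
          simp only [if_pos rfl]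
          exact ((hcder.mul_const ((1/θ) * I k)).sub
            (hSlim.const_mul (1/(θ * p k)))).const_mul (2 * p k)
        · simp only [if_neg hk]
          exact (((heder.const_mul (1/θ)).mul_const (I k))).const_mul (2 * p k)
      · exact (heder.const_mul (1/θ)).mul_const Δ₀
    have hL : (∑ k, 2 * p k * (if k = i
            then ((1/p i)*θ - θ) * ((1/θ) * I i) - (1/(θ * p i)) * (0:ℝ)
            else (1/θ) * (-θ) * I k)) + (1/θ) * (-θ) * Δ₀
        = 2 * I i - 2 * ∑ k, p k * I k - Δ₀ := by
      have hsum : ∀ k : Fin n, 2 * p k * (if k = i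
            then ((1/p i)*θ - θ) * ((1/θ) * I i) - (1/(θ * p i)) * (0:ℝ)
            else (1/θ) * (-θ) * I k)
          = -(2 * (p k * I k)) + (if k = i then 2 * I i else 0) := by
        intro k
        by_cases hk : k = i
        · subst hk
          rw [if_pos rfl, if_pos rfl]
          field_simp
          ring
        · rw [if_neg hk, if_neg hk]
          field_simp
          ring
      rw [Finset.sum_congr rfl fun k _ => hsum k, Finset.sum_add_distrib,
        Finset.sum_ite_eq' Finset.univ i (fun _ => 2 * I i)]
      simp only [Finset.mem_univ, if_pos]
      rw [Finset.sum_neg_distrib, ← Finset.mul_sum]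
      field_simp
      ring
    rw [hL] at hmain
    have heqF : (fun δ => (g δ i - g 0 i)/δ)
        =ᶠ[𝓝[>] (0:ℝ)] (fun δ =>
        (∑ k, 2 * p k * (if k = i
            then ((c δ - c 0)/δ) * ((1/θ) * I i) - (1/(θ * p i)) * (S δ / δ)
            else (1/θ) * ((Real.exp (-θ*δ) - Real.exp (-θ*0))/δ) * I k))
          + (1/θ) * ((Real.exp (-θ*δ) - Real.exp (-θ*0))/δ) * Δ₀) := by
      filter_upwards [Ioc_mem_nhdsGT zero_lt_one] with δ hδ
      exact key δ hδ
    exact Tendsto.congr' heqF.symm hmain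
  · show Δ₀ = -∑ j, p j * (2 * I j - 2 * ∑ k, p k * I k - Δ₀)
    have h2 : ∑ j, p j * (2 * I j - 2 * ∑ k, p k * I k - Δ₀) = -Δ₀ := by
      have hstep : ∑ j, p j * (2 * I j - 2 * ∑ k, p k * I k - Δ₀)
          = (∑ j, 2 * (p j * I j)) - (∑ j, p j * (2 * ∑ k, p k * I k))
            - (∑ j, p j * Δ₀) := by
        rw [← Finset.sum_sub_distrib, ← Finset.sum_sub_distrib]
        exact Finset.sum_congr rfl fun j _ => by ring
      rw [hstep, ← Finset.mul_sum, ← Finset.sum_mul, ← Finset.sum_mul, hpsum]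
      ring
    rw [h2]
    ring
end

section
/- Suppose g admits the resolvent representation g(x,i) = Σ_{k=1}^n 2p_k ∫₀^∞ g_r((x,i),(y,k)) f_k(y) dy + (1/θ)·e^{−θx}·Δ₀. Then for every x ≥ 0 and every leg i the right derivative g⁺(x,i) exists and 2·∫_x^∞ e^{−θy}·f_i(y) dy = e^{−θx}·( g⁺(x,i) + θ·g(x,i) ). -/
open Filter Topology MeasureTheory

/-- The "fundamental solution" appearing in the diagonal Green function. -/
noncomputable def uS (q θ t : ℝ) : ℝ := (1/q) * Real.sinh (θ * t) + Real.exp (-θ * t)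

lemma spiderGreen_diag (n : ℕ) (p : Fin n → ℝ) (θ x y : ℝ) (i : Fin n) :
    spiderGreen n p θ x i y i
      = (1/θ) * Real.exp (-θ * max x y) * uS (p i) θ (min x y) := by
  simp [spiderGreen, uS]

lemma spiderGreen_offdiag (n : ℕ) (p : Fin n → ℝ) (θ x y : ℝ) {i j : Fin n} (h : i ≠ j) :
    spiderGreen n p θ x i y j = (1/θ) * Real.exp (-θ * x) * Real.exp (-θ * y) := by
  simp [spiderGreen, h]

lemma expNeg_hasDerivAt (θ x : ℝ) :
    HasDerivAt (fun t => Real.exp (-θ * t)) (-θ * Real.exp (-θ * x)) x := by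
  have h : HasDerivAt (fun t : ℝ => -θ * t) (-θ) x := by
    simpa using (hasDerivAt_id x).const_mul (-θ)
  simpa [mul_comm] using h.exp

lemma uS_hasDerivAt (q θ x : ℝ) :
    HasDerivAt (uS q θ) ((1/q) * (Real.cosh (θ * x) * θ) + -θ * Real.exp (-θ * x)) x := by
  have h1 : HasDerivAt (fun t : ℝ => θ * t) θ x := by
    simpa using (hasDerivAt_id x).const_mul θ
  exact ((h1.sinh).const_mul (1/q)).add (expNeg_hasDerivAt θ x)

lemma uS_measurable (q θ : ℝ) : Measurable (uS q θ) := by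
  unfold uS
  exact ((Real.continuous_sinh.comp
      (continuous_const.mul continuous_id)).measurable.const_mul (1/q)).add
    (Real.continuous_exp.comp (continuous_const.mul continuous_id)).measurable

lemma sinh_nonneg' {t : ℝ} (ht : 0 ≤ t) : 0 ≤ Real.sinh t := by
  rw [← Real.sinh_zero]; exact Real.sinh_le_sinh.2 ht

lemma uS_nonneg {q θ t : ℝ} (hq : 0 < q) (hθ : 0 ≤ θ) (ht : 0 ≤ t) : 0 ≤ uS q θ t := by
  have h1 := sinh_nonneg' (mul_nonneg hθ ht)
  have h2 : 0 ≤ (1/q) * Real.sinh (θ * t) := mul_nonneg (by positivity) h1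
  unfold uS; nlinarith [Real.exp_pos (-θ * t)]

lemma uS_le {q θ t b : ℝ} (hq : 0 < q) (hθ : 0 ≤ θ) (ht : 0 ≤ t) (htb : t ≤ b) :
    uS q θ t ≤ (1/q) * Real.sinh (θ * b) + 1 := by
  unfold uS
  have h1 : Real.sinh (θ * t) ≤ Real.sinh (θ * b) :=
    Real.sinh_le_sinh.2 (mul_le_mul_of_nonneg_left htb hθ)
  have h2 : Real.exp (-θ * t) ≤ 1 := Real.exp_le_one_iff.2 (by nlinarith)
  have h3 := mul_le_mul_of_nonneg_left h1 (le_of_lt (by positivity : (0:ℝ) < 1/q))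
  linarith

lemma uS_deriv_abs_le {q θ t b : ℝ} (hq : 0 < q) (hθ0 : 0 < θ) (ht : 0 ≤ t) (htb : t ≤ b) :
    |(1/q) * (Real.cosh (θ * t) * θ) + -θ * Real.exp (-θ * t)|
      ≤ (1/q) * (Real.cosh (θ * b) * θ) + θ := by
  have h1 : Real.cosh (θ * t) ≤ Real.cosh (θ * b) := by
    rw [Real.cosh_le_cosh, abs_of_nonneg (mul_nonneg hθ0.le ht),
      abs_of_nonneg (mul_nonneg hθ0.le (le_trans ht htb))]
    exact mul_le_mul_of_nonneg_left htb hθ0.le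
  have h2 : (0:ℝ) < Real.exp (-θ * t) := Real.exp_pos _
  have h2' : Real.exp (-θ * t) ≤ 1 := Real.exp_le_one_iff.2 (by nlinarith)
  have hc : (0:ℝ) < Real.cosh (θ * t) := Real.cosh_pos _
  have hq' : (0:ℝ) < 1/q := by positivity
  have h3 := mul_le_mul_of_nonneg_left (mul_le_mul_of_nonneg_right h1 hθ0.le) hq'.le
  have ha : (0:ℝ) ≤ 1/q * (Real.cosh (θ * t) * θ) :=
    mul_nonneg hq'.le (mul_nonneg hc.le hθ0.le)
  have hb : (0:ℝ) ≤ 1/q * (Real.cosh (θ * b) * θ) := le_trans ha h3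
  have h4 : θ * Real.exp (-θ * t) ≤ θ := by nlinarith
  have h5 : (0:ℝ) < θ * Real.exp (-θ * t) := mul_pos hθ0 h2
  rw [abs_le]
  constructor <;> nlinarith

/-- The key MVT estimate for the remainder term. -/
lemma psi_bound {q θ x δ y : ℝ} (hq : 0 < q) (hθ0 : 0 < θ) (hx : 0 ≤ x)
    (hδ0 : 0 < δ) (hδ1 : δ ≤ 1) (hy1 : x < y) (hy2 : y ≤ x + δ) :
    |Real.exp (-θ * (x + δ)) * uS q θ y - uS q θ (x + δ) * Real.exp (-θ * y)|
      ≤ (((1/q) * (Real.cosh (θ * (x+1)) * θ) + θ) + θ * ((1/q) * Real.sinh (θ * (x+1)) + 1)) * δ := by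
  set M : ℝ := (1/q) * Real.sinh (θ * (x+1)) + 1 with hM
  set M' : ℝ := (1/q) * (Real.cosh (θ * (x+1)) * θ) + θ with hM'
  have hM0 : 0 ≤ M := by
    rw [hM]
    have h1 := sinh_nonneg' (by positivity : (0:ℝ) ≤ θ * (x+1))
    nlinarith [mul_nonneg (le_of_lt (by positivity : (0:ℝ) < 1/q)) h1]
  have hM'0 : 0 ≤ M' := by
    rw [hM']
    have h1 : (0:ℝ) < Real.cosh (θ * (x+1)) := Real.cosh_pos _
    nlinarith [mul_nonneg (le_of_lt (by positivity : (0:ℝ) < 1/q)) (mul_nonneg h1.le hθ0.le)]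
  set c1 : ℝ := Real.exp (-θ * (x + δ)) with hc1
  set c2 : ℝ := uS q θ (x + δ) with hc2
  have hc1b : |c1| ≤ 1 := by
    rw [hc1, abs_of_pos (Real.exp_pos _)]
    exact Real.exp_le_one_iff.2 (by nlinarith)
  have hc2b : |c2| ≤ M := by
    rw [hc2, abs_of_nonneg (uS_nonneg hq hθ0.le (by linarith))]
    exact uS_le hq hθ0.le (by linarith) (by linarith)
  set ψ : ℝ → ℝ := fun t => c1 * uS q θ t - c2 * Real.exp (-θ * t) with hψ
  set ψ' : ℝ → ℝ := fun t =>
    c1 * ((1/q) * (Real.cosh (θ * t) * θ) + -θ * Real.exp (-θ * t))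
      - c2 * (-θ * Real.exp (-θ * t)) with hψ'
  have hψder : ∀ t ∈ Set.Icc x (x+1), HasDerivWithinAt ψ (ψ' t) (Set.Icc x (x+1)) t :=
    fun t _ => (((uS_hasDerivAt q θ t).const_mul c1).sub
      ((expNeg_hasDerivAt θ t).const_mul c2)).hasDerivWithinAt
  have hψ'b : ∀ t ∈ Set.Icc x (x+1), ‖ψ' t‖ ≤ M' + θ * M := by
    intro t ht
    have ht0 : 0 ≤ t := le_trans hx ht.1
    have hd1 : |(1/q) * (Real.cosh (θ * t) * θ) + -θ * Real.exp (-θ * t)| ≤ M' :=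
      uS_deriv_abs_le hq hθ0 ht0 ht.2
    have hd2 : |(-θ * Real.exp (-θ * t))| ≤ θ := by
      have h2 : Real.exp (-θ * t) ≤ 1 := Real.exp_le_one_iff.2 (by nlinarith)
      have h3 : (0:ℝ) < Real.exp (-θ * t) := Real.exp_pos _
      rw [abs_of_nonpos (by nlinarith)]
      nlinarith
    have htriangle : |ψ' t| ≤ |c1| * |(1/q) * (Real.cosh (θ * t) * θ) + -θ * Real.exp (-θ * t)|
        + |c2| * |(-θ * Real.exp (-θ * t))| := by
      rw [hψ']
      calc |c1 * _ - c2 * _| ≤ |c1 * ((1/q) * (Real.cosh (θ * t) * θ) + -θ * Real.exp (-θ * t))|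
            + |c2 * (-θ * Real.exp (-θ * t))| := by
            rw [sub_eq_add_neg]
            exact (abs_add_le _ _).trans (by rw [abs_neg])
        _ = _ := by rw [abs_mul, abs_mul]
    rw [Real.norm_eq_abs]
    have hb1 : |c1| * |(1/q) * (Real.cosh (θ * t) * θ) + -θ * Real.exp (-θ * t)| ≤ 1 * M' :=
      mul_le_mul hc1b hd1 (abs_nonneg _) zero_le_one
    have hb2 : |c2| * |(-θ * Real.exp (-θ * t))| ≤ M * θ :=
      mul_le_mul hc2b hd2 (abs_nonneg _) hM0
    calc |ψ' t| ≤ |c1| * |(1/q) * (Real.cosh (θ * t) * θ) + -θ * Real.exp (-θ * t)|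
          + |c2| * |(-θ * Real.exp (-θ * t))| := htriangle
      _ ≤ 1 * M' + M * θ := add_le_add hb1 hb2
      _ = M' + θ * M := by ring
  have hmem1 : y ∈ Set.Icc x (x+1) := ⟨le_of_lt hy1, by linarith⟩
  have hmem2 : x + δ ∈ Set.Icc x (x+1) := ⟨by linarith, by linarith⟩
  have hψ0 : ψ (x + δ) = 0 := by rw [hψ]; simp only; rw [hc1, hc2]; ring
  have hK0 : 0 ≤ M' + θ * M := by nlinarith
  have hmvt := Convex.norm_image_sub_le_of_norm_hasDerivWithin_le
    hψder hψ'b (convex_Icc x (x+1)) hmem2 hmem1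
  rw [hψ0, sub_zero, Real.norm_eq_abs, Real.norm_eq_abs] at hmvt
  calc |ψ y| ≤ (M' + θ * M) * |y - (x+δ)| := hmvt
    _ ≤ (M' + θ * M) * δ := by
        apply mul_le_mul_of_nonneg_left _ hK0
        rw [abs_of_nonpos (by linarith)]; linarith

set_option maxHeartbeats 1000000 in
/-- if `g` admits the resolvent representation
`g(x,i) = Σ_k 2p_k ∫₀^∞ g_r((x,i),(y,k)) f_k(y) dy + (1/θ)e^{−θx}·Δ₀`, then for every
`x ≥ 0` and every leg `i` the right derivative `g⁺(x,i)` exists and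
`2∫_x^∞ e^{−θy} f_i(y) dy = e^{−θx}(g⁺(x,i) + θ·g(x,i))`. -/
theorem stmt_14 (n : ℕ) (hn : 1 ≤ n) (p : Fin n → ℝ)
    (hp : ∀ k, 0 < p k) (hpsum : ∑ k, p k = 1)
    (r : ℝ) (hr : 0 < r) (θ : ℝ) (hθ : θ = Real.sqrt (2 * r))
    (f : Fin n → ℝ → ℝ) (hf_meas : ∀ k, Measurable (f k))
    (hf_locbdd : ∀ k, ∀ K : ℝ, ∃ C, ∀ y ∈ Set.Icc (0:ℝ) K, |f k y| ≤ C)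
    (hf_int : ∀ k, IntegrableOn (fun y => Real.exp (-θ * y) * |f k y|) (Set.Ioi 0))
    (Δ₀ : ℝ) (g : ℝ → Fin n → ℝ)
    (hrep : ∀ x ≥ (0:ℝ), ∀ i, g x i =
      (∑ k, 2 * p k * ∫ y in Set.Ioi (0:ℝ), spiderGreen n p θ x i y k * f k y) +
        (1/θ) * Real.exp (-θ * x) * Δ₀) :
    ∀ x ≥ (0:ℝ), ∀ i, ∃ d : ℝ,
      Tendsto (fun δ => (g (x + δ) i - g x i) / δ) (𝓝[>] 0) (𝓝 d) ∧
      2 * (∫ y in Set.Ioi x, Real.exp (-θ * y) * f i y) =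
        Real.exp (-θ * x) * (d + θ * g x i) := by
  intro x hx i
  have hθ0 : 0 < θ := by
    rw [hθ]; exact Real.sqrt_pos.2 (by linarith)
  have hθne : θ ≠ 0 := ne_of_gt hθ0
  have hq : 0 < p i := hp i
  have hqne : p i ≠ 0 := ne_of_gt hq
  set F : ℝ → ℝ := fun t => ∫ y in Set.Ioi t, Real.exp (-θ * y) * f i y with hF
  set H : ℝ → ℝ := fun t => ∫ y in Set.Ioc 0 t, uS (p i) θ y * f i y with hH
  -- measurability and integrability
  have hmeas_ef : ∀ k, Measurable (fun y => Real.exp (-θ * y) * f k y) := fun k =>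
    (Real.measurable_exp.comp (measurable_const.mul measurable_id)).mul (hf_meas k)
  have hint_ef : ∀ k, IntegrableOn (fun y => Real.exp (-θ * y) * f k y) (Set.Ioi 0) := by
    intro k
    refine (hf_int k).mono' ((hmeas_ef k).aestronglyMeasurable) ?_
    filter_upwards with y
    rw [Real.norm_eq_abs, abs_mul, abs_of_pos (Real.exp_pos _)]
  have hint_uf : ∀ b : ℝ, 0 ≤ b →
      IntegrableOn (fun y => uS (p i) θ y * f i y) (Set.Ioc 0 b) := by
    intro b hb
    obtain ⟨C, hC⟩ := hf_locbdd i b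
    refine Integrable.mono'
      (g := fun _ => ((1/p i) * Real.sinh (θ * b) + 1) * C)
      (integrableOn_const measure_Ioc_lt_top.ne)
      (((uS_measurable (p i) θ).mul (hf_meas i)).aestronglyMeasurable) ?_
    rw [ae_restrict_iff' measurableSet_Ioc]
    filter_upwards with y hy
    have hy0 : 0 ≤ y := le_of_lt hy.1
    have h1 : |uS (p i) θ y| ≤ (1/p i) * Real.sinh (θ * b) + 1 := by
      rw [abs_of_nonneg (uS_nonneg hq (le_of_lt hθ0) hy0)]
      exact uS_le hq (le_of_lt hθ0) hy0 hy.2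
    have h2 : |f i y| ≤ C := hC y ⟨hy0, hy.2⟩
    rw [Real.norm_eq_abs, abs_mul]
    exact mul_le_mul h1 h2 (abs_nonneg _) (le_trans (abs_nonneg _) h1)
  -- the representation in explicit form
  set A : ℝ := (∑ k ∈ Finset.univ.erase i,
      2 * p k * ((1/θ) * ∫ y in Set.Ioi (0:ℝ), Real.exp (-θ * y) * f k y)) + (1/θ) * Δ₀ with hA
  have hrep' : ∀ t, 0 ≤ t →
      g t i = A * Real.exp (-θ * t)
        + (2 * p i / θ) * (Real.exp (-θ * t) * H t + uS (p i) θ t * F t) := by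
    intro t ht
    rw [hrep t ht i, ← Finset.sum_erase_add _ _ (Finset.mem_univ i)]
    have hterm : ∀ k ∈ Finset.univ.erase i,
        2 * p k * ∫ y in Set.Ioi (0:ℝ), spiderGreen n p θ t i y k * f k y
        = (2 * p k * ((1/θ) * ∫ y in Set.Ioi (0:ℝ), Real.exp (-θ * y) * f k y))
            * Real.exp (-θ * t) := by
      intro k hk
      have hik : i ≠ k := (Finset.mem_erase.1 hk).1.symm
      have heq : ∫ y in Set.Ioi (0:ℝ), spiderGreen n p θ t i y k * f k y
          = ∫ y in Set.Ioi (0:ℝ), ((1/θ) * Real.exp (-θ * t)) * (Real.exp (-θ * y) * f k y) := by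
        refine setIntegral_congr_fun measurableSet_Ioi fun y _ => ?_
        rw [spiderGreen_offdiag n p θ t y hik]; ring
      rw [heq, MeasureTheory.integral_const_mul]; ring
    rw [Finset.sum_congr rfl hterm, ← Finset.sum_mul]
    -- diagonal term
    have hdiag : ∫ y in Set.Ioi (0:ℝ), spiderGreen n p θ t i y i * f i y
        = (1/θ) * Real.exp (-θ * t) * H t + (1/θ) * uS (p i) θ t * F t := by
      have hsplit : Set.Ioi (0:ℝ) = Set.Ioc 0 t ∪ Set.Ioi t := (Set.Ioc_union_Ioi_eq_Ioi ht).symm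
      have heq1 : Set.EqOn (fun y => spiderGreen n p θ t i y i * f i y)
          (fun y => ((1/θ) * Real.exp (-θ * t)) * (uS (p i) θ y * f i y)) (Set.Ioc 0 t) := by
        intro y hy
        simp only
        rw [spiderGreen_diag n p θ t y i, max_eq_left hy.2, min_eq_right hy.2]
        ring
      have heq2 : Set.EqOn (fun y => spiderGreen n p θ t i y i * f i y)
          (fun y => ((1/θ) * uS (p i) θ t) * (Real.exp (-θ * y) * f i y)) (Set.Ioi t) := by
        intro y hy
        have hty : t ≤ y := le_of_lt hy
        simp only
        rw [spiderGreen_diag n p θ t y i, max_eq_right hty, min_eq_left hty]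
        ring
      have hi1 : IntegrableOn (fun y => spiderGreen n p θ t i y i * f i y) (Set.Ioc 0 t) :=
        IntegrableOn.congr_fun ((hint_uf t ht).const_mul ((1/θ) * Real.exp (-θ * t)))
          (fun y hy => (heq1 hy).symm) measurableSet_Ioc
      have hi2 : IntegrableOn (fun y => spiderGreen n p θ t i y i * f i y) (Set.Ioi t) :=
        IntegrableOn.congr_fun
          (((hint_ef i).mono_set (Set.Ioi_subset_Ioi ht)).const_mul ((1/θ) * uS (p i) θ t))
          (fun y hy => (heq2 hy).symm) measurableSet_Ioi
      rw [hsplit, setIntegral_union (Set.Ioc_disjoint_Ioi le_rfl) measurableSet_Ioi hi1 hi2,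
        setIntegral_congr_fun measurableSet_Ioc heq1,
        setIntegral_congr_fun measurableSet_Ioi heq2,
        MeasureTheory.integral_const_mul, MeasureTheory.integral_const_mul]
    rw [hdiag, hA]
    field_simp
    ring
  -- the candidate derivative
  set u'x : ℝ := (1/p i) * (Real.cosh (θ * x) * θ) + -θ * Real.exp (-θ * x) with hu'x
  set d : ℝ := A * (-θ * Real.exp (-θ * x)) +
      (2 * p i / θ) * ((-θ * Real.exp (-θ * x)) * H x + u'x * F x) with hd
  refine ⟨d, ?_, ?_⟩
  · -- the limit of the difference quotients
    set E : ℝ → ℝ := fun δ => Real.exp (-θ * (x + δ)) with hE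
    set U : ℝ → ℝ := fun δ => uS (p i) θ (x + δ) with hU
    have hadd : HasDerivAt (fun δ : ℝ => x + δ) 1 0 := by
      simpa using (hasDerivAt_id (0:ℝ)).const_add x
    have hmono : 𝓝[>] (0:ℝ) ≤ 𝓝[≠] (0:ℝ) :=
      nhdsWithin_mono 0 (fun δ hδ => ne_of_gt hδ)
    have hslopeE : Tendsto (fun δ => (E δ - E 0) / δ) (𝓝[>] 0) (𝓝 (-θ * Real.exp (-θ * x))) := by
      have hder : HasDerivAt E (-θ * Real.exp (-θ * x)) 0 := by
        have h := (expNeg_hasDerivAt θ (x + 0)).comp 0 hadd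
        simpa [hE, Function.comp_def] using h
      have h2 := (hasDerivAt_iff_tendsto_slope.1 hder).mono_left hmono
      refine h2.congr fun δ => ?_
      rw [slope_def_field]; ring_nf
    have hslopeU : Tendsto (fun δ => (U δ - U 0) / δ) (𝓝[>] 0) (𝓝 u'x) := by
      have hder : HasDerivAt U u'x 0 := by
        have h := (uS_hasDerivAt (p i) θ (x + 0)).comp 0 hadd
        simpa [hU, hu'x, Function.comp_def] using h
      have h2 := (hasDerivAt_iff_tendsto_slope.1 hder).mono_left hmono
      refine h2.congr fun δ => ?_
      rw [slope_def_field]; ring_nf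
    -- the remainder term
    set R : ℝ → ℝ := fun δ => ∫ y in Set.Ioc x (x + δ),
        (E δ * uS (p i) θ y - U δ * Real.exp (-θ * y)) * f i y with hR
    -- remainder tends to zero
    have hRlim : Tendsto (fun δ => R δ / δ) (𝓝[>] 0) (𝓝 0) := by
      obtain ⟨C, hC⟩ := hf_locbdd i (x + 1)
      set C' : ℝ := max C 0 with hC'
      have hC'0 : 0 ≤ C' := le_max_right _ _
      set K : ℝ := ((1/p i) * (Real.cosh (θ * (x+1)) * θ) + θ)
          + θ * ((1/p i) * Real.sinh (θ * (x+1)) + 1) with hK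
      have hK0 : 0 ≤ K := by
        rw [hK]
        have h1 : (0:ℝ) < Real.cosh (θ * (x+1)) := Real.cosh_pos _
        have h2 := sinh_nonneg' (by positivity : (0:ℝ) ≤ θ * (x+1))
        have h3 : (0:ℝ) < 1/p i := by positivity
        nlinarith [mul_nonneg h3.le (mul_nonneg h1.le hθ0.le), mul_nonneg h3.le h2,
          mul_nonneg hθ0.le (mul_nonneg h3.le h2)]
      have hbound : ∀ δ ∈ Set.Ioc (0:ℝ) 1, ‖R δ / δ‖ ≤ (K * C') * δ := by
        intro δ hδ
        obtain ⟨hδ0, hδ1⟩ := hδ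
        have hpt : ∀ y ∈ Set.Ioc x (x + δ),
            ‖(E δ * uS (p i) θ y - U δ * Real.exp (-θ * y)) * f i y‖ ≤ (K * δ) * C' := by
          intro y hy
          have h1 : |E δ * uS (p i) θ y - U δ * Real.exp (-θ * y)| ≤ K * δ := by
            rw [hE, hU, hK]
            exact psi_bound hq hθ0 hx hδ0 hδ1 hy.1 hy.2
          have h2 : |f i y| ≤ C' :=
            le_trans (hC y ⟨le_trans hx hy.1.le, by linarith [hy.2]⟩) (le_max_left _ _)
          rw [Real.norm_eq_abs, abs_mul]
          exact mul_le_mul h1 h2 (abs_nonneg _) (by positivity)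
        have hmeasψ : AEStronglyMeasurable
            (fun y => (E δ * uS (p i) θ y - U δ * Real.exp (-θ * y)) * f i y)
            (volume.restrict (Set.Ioc x (x + δ))) :=
          ((((uS_measurable (p i) θ).const_mul (E δ)).sub
            ((Real.measurable_exp.comp (measurable_const.mul measurable_id)).const_mul (U δ))).mul
            (hf_meas i)).aestronglyMeasurable
        have hnorm : ‖R δ‖ ≤ (K * δ * C') * δ := by
          have h := norm_setIntegral_le_of_norm_le_const (μ := volume)
            (s := Set.Ioc x (x + δ)) (C := K * δ * C') measure_Ioc_lt_top hpt
          have hvol : (volume (Set.Ioc x (x + δ))).toReal = δ := by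
            rw [Real.volume_Ioc, ENNReal.toReal_ofReal (by linarith)]
            ring
          rw [measureReal_def, hvol] at h
          exact h
        rw [norm_div, Real.norm_eq_abs δ, abs_of_pos hδ0, div_le_iff₀ hδ0]
        calc ‖R δ‖ ≤ (K * δ * C') * δ := hnorm
          _ = K * C' * δ * δ := by ring
      have hlim0 : Tendsto (fun δ : ℝ => K * C' * δ) (𝓝[>] 0) (𝓝 0) := by
        have h : Tendsto (fun δ : ℝ => K * C' * δ) (𝓝 0) (𝓝 (K * C' * 0)) :=
          (continuous_const.mul continuous_id).tendsto 0
        rw [mul_zero] at h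
        exact h.mono_left nhdsWithin_le_nhds
      refine squeeze_zero_norm' ?_ hlim0
      filter_upwards [Ioc_mem_nhdsGT_of_mem (Set.mem_Ico.2 ⟨le_rfl, zero_lt_one⟩)] with δ hδ
      exact hbound δ hδ
    -- the eventual formula for the difference quotient
    have hdq : ∀ᶠ δ in 𝓝[>] (0:ℝ), (g (x + δ) i - g x i) / δ
        = A * ((E δ - E 0) / δ)
          + (2 * p i / θ) * (((E δ - E 0) / δ) * H x + ((U δ - U 0) / δ) * F x + R δ / δ) := by
      filter_upwards [self_mem_nhdsWithin] with δ hδ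
      have hδ0 : (0:ℝ) < δ := hδ
      have hδne : δ ≠ 0 := ne_of_gt hδ0
      have hxδ : (0:ℝ) ≤ x + δ := by linarith
      set J1 : ℝ := ∫ y in Set.Ioc x (x + δ), uS (p i) θ y * f i y with hJ1
      set J2 : ℝ := ∫ y in Set.Ioc x (x + δ), Real.exp (-θ * y) * f i y with hJ2
      have hJ1int : IntegrableOn (fun y => uS (p i) θ y * f i y) (Set.Ioc x (x + δ)) :=
        (hint_uf (x + δ) hxδ).mono_set (Set.Ioc_subset_Ioc_left hx)
      have hJ2int : IntegrableOn (fun y => Real.exp (-θ * y) * f i y) (Set.Ioc x (x + δ)) :=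
        (hint_ef i).mono_set (fun y hy => lt_of_le_of_lt hx hy.1)
      have hHsplit : H (x + δ) = H x + J1 := by
        have hun : Set.Ioc (0:ℝ) (x + δ) = Set.Ioc 0 x ∪ Set.Ioc x (x + δ) :=
          (Set.Ioc_union_Ioc_eq_Ioc hx (by linarith)).symm
        have hdisj : Disjoint (Set.Ioc (0:ℝ) x) (Set.Ioc x (x + δ)) :=
          Set.disjoint_left.2 fun y h1 h2 => absurd h2.1 (not_lt.2 h1.2)
        simp only [hH]
        rw [hun, setIntegral_union hdisj measurableSet_Ioc (hint_uf x hx) hJ1int]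
      have hFsplit : F x = J2 + F (x + δ) := by
        have hun : Set.Ioi x = Set.Ioc x (x + δ) ∪ Set.Ioi (x + δ) :=
          (Set.Ioc_union_Ioi_eq_Ioi (by linarith)).symm
        simp only [hF]
        rw [hun, setIntegral_union (Set.Ioc_disjoint_Ioi le_rfl) measurableSet_Ioi hJ2int
          ((hint_ef i).mono_set (Set.Ioi_subset_Ioi (by linarith)))]
      have hRval : R δ = E δ * J1 - U δ * J2 := by
        simp only [hR]
        have heq : ∫ y in Set.Ioc x (x + δ), (E δ * uS (p i) θ y - U δ * Real.exp (-θ * y)) * f i y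
            = ∫ y in Set.Ioc x (x + δ),
              (E δ * (uS (p i) θ y * f i y) - U δ * (Real.exp (-θ * y) * f i y)) := by
          refine setIntegral_congr_fun measurableSet_Ioc fun y _ => ?_
          ring
        rw [heq, integral_sub (hJ1int.const_mul (E δ)) (hJ2int.const_mul (U δ)),
          MeasureTheory.integral_const_mul, MeasureTheory.integral_const_mul]
      have h1 : g (x + δ) i = A * E δ + (2 * p i / θ) * (E δ * H (x + δ) + U δ * F (x + δ)) := by
        rw [hrep' (x + δ) hxδ]
      have h2 : g x i = A * E 0 + (2 * p i / θ) * (E 0 * H x + U 0 * F x) := by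
        rw [hrep' x hx]
        have hE0 : E 0 = Real.exp (-θ * x) := by rw [hE]; norm_num
        have hU0 : U 0 = uS (p i) θ x := by rw [hU]; norm_num
        rw [hE0, hU0]
      rw [h1, h2, hHsplit, hFsplit, hRval]
      field_simp
      ring
    have hlim : Tendsto (fun δ => A * ((E δ - E 0) / δ)
        + (2 * p i / θ) * (((E δ - E 0) / δ) * H x + ((U δ - U 0) / δ) * F x + R δ / δ))
        (𝓝[>] (0:ℝ))
        (𝓝 (A * (-θ * Real.exp (-θ * x))
          + (2 * p i / θ) * ((-θ * Real.exp (-θ * x)) * H x + u'x * F x + 0))) :=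
      (hslopeE.const_mul A).add
        ((((hslopeE.mul_const (H x)).add (hslopeU.mul_const (F x))).add hRlim).const_mul _)
    rw [add_zero] at hlim
    exact Tendsto.congr' (hdq.mono fun δ h => h.symm) hlim
  · -- the identity
    have hkey : d + θ * g x i = 2 * Real.exp (θ * x) * F x := by
      rw [hrep' x hx, hd, hu'x]
      have hcs : Real.cosh (θ * x) = Real.exp (θ * x) - Real.sinh (θ * x) := by
        linarith [Real.cosh_add_sinh (θ * x)]
      have hux : uS (p i) θ x = (1/p i) * Real.sinh (θ * x) + Real.exp (-θ * x) := rfl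
      rw [hux]
      field_simp
      rw [hcs]
      ring
    have h1 : Real.exp (-θ * x) * Real.exp (θ * x) = 1 := by
      rw [← Real.exp_add]; norm_num
    calc 2 * (∫ y in Set.Ioi x, Real.exp (-θ * y) * f i y) = 2 * F x := rfl
      _ = Real.exp (-θ * x) * (2 * Real.exp (θ * x) * F x) := by
          rw [show Real.exp (-θ * x) * (2 * Real.exp (θ * x) * F x)
            = 2 * (Real.exp (-θ * x) * Real.exp (θ * x)) * F x from by ring, h1]; ring
      _ = Real.exp (-θ * x) * (d + θ * g x i) := by rw [hkey]
end

section
/- Fix n ≥ 1, weights p_k > 0 with Σ p_k = 1, constants A_k > 0, take r = 1/2 (so θ = 1), and let z : {1,…,n} → (0,∞). Then for each i the boundary equation Σ_{k=1}^n ∫₀^{z_k} g_{1/2}((z_i,i),(y,k)) · p_k · A_k · y dy = g_{1/2}((z_i,i),𝟎) · Σ_{k=1}^n p_k·A_k holds if and only if A_i·( z_i·cosh(z_i) − sinh(z_i) ) = Σ_{k=1}^n A_k·p_k·e^{−z_k}·(1 + z_k). -/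
open Filter Topology MeasureTheory

lemma int_y_exp (z : ℝ) : ∫ y in (0:ℝ)..z, y * Real.exp (-y) = 1 - Real.exp (-z) * (1 + z) := by
  have h : ∀ y ∈ Set.uIcc (0:ℝ) z,
      HasDerivAt (fun t => -((1+t) * Real.exp (-t))) (y * Real.exp (-y)) y := by
    intro y _
    have h1 : HasDerivAt (fun t : ℝ => Real.exp (-t)) (-Real.exp (-y)) y := by
      exact ((Real.hasDerivAt_exp (-y)).comp y (hasDerivAt_neg y)).congr_deriv (by ring)
    have h2 : HasDerivAt (fun t : ℝ => (1+t)) 1 y := by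
      simpa using (hasDerivAt_id y).const_add (1:ℝ)
    have h3 := (h2.mul h1).neg
    exact h3.congr_deriv (by ring)
  have hc : IntervalIntegrable (fun y => y * Real.exp (-y)) volume 0 z :=
    (continuous_id.mul (Real.continuous_exp.comp continuous_neg)).intervalIntegrable _ _
  have := intervalIntegral.integral_eq_sub_of_hasDerivAt h hc
  rw [this]; simp [Real.exp_zero]; ring_nf

lemma int_y_sinh (z : ℝ) : ∫ y in (0:ℝ)..z, y * Real.sinh y = z * Real.cosh z - Real.sinh z := by
  have h : ∀ y ∈ Set.uIcc (0:ℝ) z,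
      HasDerivAt (fun t => t * Real.cosh t - Real.sinh t) (y * Real.sinh y) y := by
    intro y _
    have h1 := (hasDerivAt_id y).mul (Real.hasDerivAt_cosh y)
    have h2 := Real.hasDerivAt_sinh y
    have h3 := h1.sub h2
    exact h3.congr_deriv (by simp [id])
  have hc : IntervalIntegrable (fun y => y * Real.sinh y) volume 0 z :=
    (continuous_id.mul Real.continuous_sinh).intervalIntegrable _ _
  have := intervalIntegral.integral_eq_sub_of_hasDerivAt h hc
  rw [this]; simp



/-- Green function of the Brownian spider between `(x,i)` and the origin `𝟎`. -/
noncomputable def spiderGreenOrigin (θ x : ℝ) : ℝ := (1/θ) * Real.exp (-θ * x)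


/-- with `r = 1/2` (so `θ = 1`), the boundary equation for the thresholds of
the stopping region of the reward `g(x,i) = A_i x` is equivalent to
`A_i(z_i cosh z_i − sinh z_i) = Σ_k A_k p_k e^{−z_k}(1 + z_k)`. -/
theorem stmt_18 (n : ℕ) (hn : 1 ≤ n) (p : Fin n → ℝ)
    (hp : ∀ k, 0 < p k) (hpsum : ∑ k, p k = 1)
    (A : Fin n → ℝ) (hA : ∀ k, 0 < A k)
    (z : Fin n → ℝ) (hz : ∀ k, 0 < z k) (i : Fin n) :
    (∑ k, ∫ y in (0:ℝ)..(z k), spiderGreen n p 1 (z i) i y k * (p k * A k * y)) =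
        spiderGreenOrigin 1 (z i) * ∑ k, p k * A k ↔
      A i * (z i * Real.cosh (z i) - Real.sinh (z i)) =
        ∑ k, A k * p k * Real.exp (-z k) * (1 + z k) := by
  have key : ∀ k, (∫ y in (0:ℝ)..(z k), spiderGreen n p 1 (z i) i y k * (p k * A k * y))
      = Real.exp (-(z i)) * (p k * A k * (1 - Real.exp (-(z k)) * (1 + z k)))
        + (if k = i then Real.exp (-(z i)) * (A i * (z i * Real.cosh (z i) - Real.sinh (z i))) else 0) := by
    intro k
    by_cases hk : k = i
    · subst hk
      rw [if_pos rfl]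
      have hEq : Set.EqOn
          (fun y => spiderGreen n p 1 (z k) k y k * (p k * A k * y))
          (fun y => Real.exp (-(z k)) * (p k * A k) * (y * Real.exp (-y))
            + Real.exp (-(z k)) * A k * (y * Real.sinh y)) (Set.uIcc 0 (z k)) := by
        intro y hy
        rw [Set.uIcc_of_le (le_of_lt (hz k))] at hy
        obtain ⟨hy0, hy1⟩ := hy
        simp only [spiderGreen, if_pos rfl, ↓reduceIte]
        rw [max_eq_left hy1, min_eq_right hy1]
        have hpk := (hp k).ne'
        field_simp
        ring
      have hI1 : IntervalIntegrable
          (fun y : ℝ => Real.exp (-(z k)) * (p k * A k) * (y * Real.exp (-y))) volume 0 (z k) := by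
        apply Continuous.intervalIntegrable; fun_prop
      have hI2 : IntervalIntegrable
          (fun y : ℝ => Real.exp (-(z k)) * A k * (y * Real.sinh y)) volume 0 (z k) := by
        apply Continuous.intervalIntegrable; fun_prop
      rw [intervalIntegral.integral_congr hEq, intervalIntegral.integral_add hI1 hI2,
        intervalIntegral.integral_const_mul, intervalIntegral.integral_const_mul,
        int_y_exp, int_y_sinh]
      ring
    · rw [if_neg hk]
      have hik : ¬ i = k := fun h => hk h.symm
      have hEq : Set.EqOn
          (fun y => spiderGreen n p 1 (z i) i y k * (p k * A k * y))
          (fun y => Real.exp (-(z i)) * (p k * A k) * (y * Real.exp (-y))) (Set.uIcc 0 (z k)) := by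
        intro y _
        simp only [spiderGreen, if_neg hik]
        ring_nf
      rw [intervalIntegral.integral_congr hEq, intervalIntegral.integral_const_mul, int_y_exp]
      ring
  have hg : spiderGreenOrigin 1 (z i) = Real.exp (-(z i)) := by
    simp [spiderGreenOrigin]
  have hexp : Real.exp (-(z i)) ≠ 0 := (Real.exp_pos _).ne'
  rw [Finset.sum_congr rfl (fun k _ => key k), Finset.sum_add_distrib]
  simp only [Finset.sum_ite_eq' Finset.univ i, Finset.mem_univ, if_pos]
  rw [← Finset.mul_sum, ← mul_add, hg, mul_right_inj' hexp]
  have h3 : ∑ k, p k * A k - ∑ k, p k * A k * (1 - Real.exp (-(z k)) * (1 + z k))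
      = ∑ k, A k * p k * Real.exp (-z k) * (1 + z k) := by
    rw [← Finset.sum_sub_distrib]
    exact Finset.sum_congr rfl fun k _ => by ring
  constructor
  · intro h; linarith
  · intro h; linarith
end
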